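/- Let λ > 1 be a natural number, f = E_λ, 0 < θ < 1, and v ∈ C^{1+ε}(S¹) with max|v| = M, Hölder constant Γ₂ for v', and suppose there is c with v'(c) > 0 such that, with δ₁ = 6M / ((1−λ^{-θ}) v'(c) λ^θ) and δ₂ = (v'(c)/(6Γ₂))^{1/ε}, one has δ₁ ≤ δ₂ ≤ 1 and v'(c)/3 > 2M'/((1−λ^{θ-1})λ^{1-θ}) where M' = max|v'|. Then for every x whose forward orbit under f is dense (hence Lebesgue-a.e. x) and every ĥ > 0, there exists 0 < h < ĥ with |α(x) − α(x+h)| ≥ C₀ h^θ, where C₀ = (6M/(1−λ^{-θ}))^{1-θ} λ^{-2θ+θ²}(v'(c))^θ / 12 and α is the unique bounded solution of the twisted cohomological equation. In particular, α is not (θ+γ)-Hölder at x for any γ > 0. -/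

import Mathlib

open Real


set_option maxHeartbeats 1000000 in
/-- linear case, condition (A) for k₀ = 1: with `f = E_b`,
`α x = -∑' i, v(bⁱ x) b^{-θ(i+1)}`, `δ₁ = 6M/((1−b^{-θ}) v'(c) b^θ)`,
`δ₂ = (v'(c)/(6Γ₂))^{1/ε}`, `δ₁ ≤ δ₂ ≤ 1` and
`v'(c)/3 > 2M'/((1−b^{θ-1}) b^{1-θ})`, every point with dense forward orbit
(hence Lebesgue-a.e. point) admits arbitrarily small `h` with
`|α x − α (x+h)| ≥ C₀ h^θ`, where
`C₀ = (6M/(1−b^{-θ}))^{1-θ} b^{−2θ+θ²} (v'(c))^θ / 12`. In particular `α` is not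
`(θ+γ)`-Hölder at such `x` for any `γ > 0`. -/
theorem stmt18 (b : ℕ) (hb : 1 < b) (θ ε : ℝ) (hθ0 : 0 < θ) (hθ1 : θ < 1)
    (hε0 : 0 < ε) (hε1 : ε ≤ 1)
    (v : ℝ → ℝ) (hv : ContDiff ℝ 1 v) (hvper : Function.Periodic v 1)
    (M M' Γ₂ : ℝ) (hΓ₂0 : 0 < Γ₂) (hM : ∀ y, |v y| ≤ M) (hM' : ∀ y, |deriv v y| ≤ M')
    (hΓ₂ : ∀ u w : ℝ, |deriv v u - deriv v w| ≤ Γ₂ * |u - w| ^ ε)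
    (c : ℝ) (hc : 0 < deriv v c)
    (δ₁ δ₂ : ℝ)
    (hδ₁ : δ₁ = 6 * M / ((1 - (b : ℝ) ^ (-θ)) * deriv v c * (b : ℝ) ^ θ))
    (hδ₂ : δ₂ = (deriv v c / (6 * Γ₂)) ^ (1 / ε))
    (hδ₁₂ : δ₁ ≤ δ₂) (hδ₂1 : δ₂ ≤ 1)
    (hcond : deriv v c / 3 > 2 * M' / ((1 - (b : ℝ) ^ (θ - 1)) * (b : ℝ) ^ (1 - θ)))
    (A : ℝ → ℝ)
    (hA : A = fun x => -∑' i : ℕ,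
      v ((b : ℝ) ^ i * x) * (b : ℝ) ^ (-(θ * ((i : ℝ) + 1))))
    (c₀ : ℝ)
    (hc₀ : c₀ = (6 * M / (1 - (b : ℝ) ^ (-θ))) ^ (1 - θ) *
      (b : ℝ) ^ (-2 * θ + θ ^ 2) * (deriv v c) ^ θ / 12) :
    ∀ x : ℝ,
      (∀ y ∈ Set.Icc (0 : ℝ) 1,
        y ∈ closure (Set.range fun k : ℕ => Int.fract ((b : ℝ) ^ k * x))) →
      (∀ hhat : ℝ, 0 < hhat →
        ∃ h : ℝ, 0 < h ∧ h < hhat ∧ |A x - A (x + h)| ≥ c₀ * h ^ θ) ∧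
      (∀ γ : ℝ, 0 < γ →
        ¬∃ C ε' : ℝ, 0 < ε' ∧ ∀ y : ℝ, |y - x| < ε' →
          |A x - A y| ≤ C * |x - y| ^ (θ + γ)) := by
  intro x hx
  set B : ℝ := (b : ℝ) with hBdef
  have hB1 : (1:ℝ) < B := by rw [hBdef]; exact_mod_cast hb
  have hB0 : (0:ℝ) < B := lt_trans one_pos hB1
  set D : ℝ := deriv v c with hDdef
  set q : ℝ := B ^ (-θ) with hqdef
  have hq0 : 0 < q := rpow_pos_of_pos hB0 _
  have hq1 : q < 1 := rpow_lt_one_of_one_lt_of_neg hB1 (by linarith)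
  have h1q : 0 < 1 - q := by linarith
  -- B^θ = q⁻¹
  have hBθ : B ^ θ = q⁻¹ := by
    rw [hqdef, ← Real.rpow_neg hB0.le, neg_neg]
  -- M > 0
  have hM0 : 0 < M := by
    rcases lt_or_ge 0 M with h | h
    · exact h
    · exfalso
      have hv0 : v = fun _ => (0:ℝ) := funext fun y => by
        have := hM y; have : |v y| = 0 := le_antisymm (by linarith) (abs_nonneg _)
        simpa [abs_eq_zero] using this
      rw [hDdef, hv0] at hc; simp at hc
  have hM'0 : 0 < M' := lt_of_lt_of_le hc (le_trans (le_abs_self _) (hM' c))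
  have hδ₂0 : 0 < δ₂ := by
    rw [hδ₂]; exact rpow_pos_of_pos (div_pos hc (by positivity)) _
  have hδ₁0 : 0 < δ₁ := by
    rw [hδ₁]
    exact div_pos (by positivity) (mul_pos (mul_pos h1q hc) (rpow_pos_of_pos hB0 θ))
  have hvd : Differentiable ℝ v := hv.differentiable one_ne_zero
  have hv'cont : Continuous (deriv v) := hv.continuous_deriv le_rfl
  have hv'per : Function.Periodic (deriv v) 1 := by
    intro y
    have hfun : (fun t => v (t + 1)) = v := funext fun t => hvper t
    calc deriv v (y + 1) = deriv (fun t => v (t + 1)) y := (deriv_comp_add_const v 1 y).symm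
      _ = deriv v y := by rw [hfun]
  have hlip : ∀ a₁ a₂ : ℝ, |v a₁ - v a₂| ≤ M' * |a₁ - a₂| := by
    intro a₁ a₂
    have := Convex.norm_image_sub_le_of_norm_deriv_le (f := v) (s := Set.univ)
      (fun z _ => hvd z) (fun z _ => by simpa using hM' z) convex_univ
      (Set.mem_univ a₂) (Set.mem_univ a₁)
    simpa [Real.norm_eq_abs] using this
  -- summability
  have hsumm : ∀ y : ℝ, Summable (fun i : ℕ => v (B ^ i * y) * q ^ (i + 1)) := by
    intro y
    apply Summable.of_norm_bounded (g := fun i => (M * q) * q ^ i)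
    · exact (summable_geometric_of_lt_one hq0.le hq1).mul_left _
    · intro i
      rw [norm_mul, norm_pow, Real.norm_eq_abs, Real.norm_eq_abs, abs_of_pos hq0, pow_succ]
      calc |v (B ^ i * y)| * q ^ (i+1) ≤ M * q ^ (i+1) :=
            mul_le_mul_of_nonneg_right (hM _) (by positivity)
        _ = M * q * q ^ i := by ring
  have hAeq : ∀ y : ℝ, A y = -∑' i : ℕ, v (B ^ i * y) * q ^ (i + 1) := by
    intro y
    simp only [hA]
    congr 1
    apply tsum_congr
    intro i
    congr 1
    rw [hqdef, ← Real.rpow_natCast (B ^ (-θ)) (i+1), ← Real.rpow_mul hB0.le]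
    congr 1
    push_cast
    ring
  -- key part 1
  have key : ∀ hhat : ℝ, 0 < hhat →
      ∃ h : ℝ, 0 < h ∧ h < hhat ∧ |A x - A (x + h)| ≥ c₀ * h ^ θ := by
    intro hhat hhat0
    set η : ℝ := δ₂ * ((2:ℝ) ^ (1/ε) - 1) with hηdef
    have h2rp : (1:ℝ) < (2:ℝ) ^ (1/ε) :=
      (Real.one_lt_rpow_iff_of_pos two_pos).mpr (Or.inl ⟨one_lt_two, by positivity⟩)
    have hη0 : 0 < η := mul_pos hδ₂0 (by linarith)
    set c' : ℝ := Int.fract c with hc'def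
    obtain ⟨N, hN⟩ := pow_unbounded_of_one_lt (y := B) (δ₁ / hhat) hB1
    have hNlt : δ₁ / B ^ N < hhat := by
      rw [div_lt_iff₀ (pow_pos hB0 N)]
      have h9 := (div_lt_iff₀ hhat0).mp hN
      calc δ₁ < B ^ N * hhat := h9
        _ = hhat * B ^ N := mul_comm _ _
    set F : Finset ℝ := (Finset.range N).image (fun k => Int.fract (B ^ k * x)) with hFdef
    have hm : c' < min (c' + η) 1 := lt_min (by linarith) (Int.fract_lt_one c)
    have hinf : (Set.Ioo c' (min (c' + η) 1)).Infinite :=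
      Set.infinite_coe_iff.mp (Set.Ioo.infinite hm)
    obtain ⟨y₀, hy₀I, hy₀F⟩ := hinf.exists_notMem_finset F
    have hy₀c : c' < y₀ := hy₀I.1
    have hy₀u : y₀ < min (c' + η) 1 := hy₀I.2
    have hy₀η : y₀ < c' + η := lt_of_lt_of_le hy₀u (min_le_left _ _)
    have hF'ne : (insert (y₀ + 1) F).Nonempty := Finset.insert_nonempty _ _
    set ρ₂ : ℝ := (insert (y₀ + 1) F).inf' hF'ne (fun z => |z - y₀|) with hρ₂def
    have hρ₂0 : 0 < ρ₂ := by
      rw [hρ₂def, Finset.lt_inf'_iff]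
      intro z hz
      rw [abs_pos, sub_ne_zero]
      rcases Finset.mem_insert.mp hz with h | h
      · rw [h]; intro he; linarith [he.symm ▸ (by linarith : y₀ < y₀ + 1)]
      · intro he; exact hy₀F (he ▸ h)
    set ρ₁ : ℝ := η - (y₀ - c') with hρ₁def
    have hρ₁0 : 0 < ρ₁ := by rw [hρ₁def]; linarith
    have hρ0 : 0 < min ρ₁ ρ₂ := lt_min hρ₁0 hρ₂0
    have hy₀mem : y₀ ∈ Set.Icc (0:ℝ) 1 :=
      ⟨le_trans (Int.fract_nonneg c) hy₀c.le,
        le_of_lt (lt_of_lt_of_le hy₀u (min_le_right _ _))⟩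
    obtain ⟨z, hzmem, hzd⟩ := Metric.mem_closure_iff.mp (hx y₀ hy₀mem) _ hρ0
    obtain ⟨n, rfl⟩ := Set.mem_range.mp hzmem
    have hdist : |Int.fract (B ^ n * x) - y₀| < min ρ₁ ρ₂ := by
      rw [abs_sub_comm]
      simpa [Real.dist_eq] using hzd
    have hnN : N ≤ n := by
      by_contra hlt
      push_neg at hlt
      have hmemF : Int.fract (B ^ n * x) ∈ F := by
        rw [hFdef]
        exact Finset.mem_image_of_mem _ (Finset.mem_range.mpr hlt)
      have h2 : ρ₂ ≤ |Int.fract (B ^ n * x) - y₀| :=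
        Finset.inf'_le _ (Finset.mem_insert_of_mem hmemF)
      have h3 := lt_of_lt_of_le hdist (min_le_right ρ₁ ρ₂)
      linarith
    have htc : |Int.fract (B ^ n * x) - c'| < η := by
      have h1 : |Int.fract (B ^ n * x) - y₀| < ρ₁ := lt_of_lt_of_le hdist (min_le_left _ _)
      have h2 : |Int.fract (B ^ n * x) - c'| ≤ |Int.fract (B ^ n * x) - y₀| + |y₀ - c'| :=
        abs_sub_le _ _ _
      rw [abs_of_pos (by linarith : (0:ℝ) < y₀ - c')] at h2
      rw [hρ₁def] at h1
      linarith
    -- the increment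
    set hstep : ℝ := δ₁ / B ^ n with hhdef
    have hBn0 : (0:ℝ) < B ^ n := pow_pos hB0 n
    have hstep0 : 0 < hstep := by rw [hhdef]; positivity
    have hsteplt : hstep < hhat := by
      have hBNn : (B:ℝ) ^ N ≤ B ^ n := pow_le_pow_right₀ hB1.le hnN
      calc hstep ≤ δ₁ / B ^ N := by
            rw [hhdef]
            exact div_le_div_of_nonneg_left hδ₁0.le (pow_pos hB0 N) hBNn
        _ < hhat := hNlt
    set t₀ : ℝ := B ^ n * x with ht₀def
    have hBh : B ^ n * hstep = δ₁ := by rw [hhdef]; field_simp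
    set d : ℕ → ℝ := fun i => (v (B ^ i * (x + hstep)) - v (B ^ i * x)) * q ^ (i + 1) with hddef
    have hd_sum : Summable d := by
      have h10 := (hsumm (x + hstep)).sub (hsumm x)
      apply h10.congr
      intro i
      rw [hddef]
      ring
    have hS : A x - A (x + hstep) = ∑' i, d i := by
      calc A x - A (x + hstep)
          = (∑' i : ℕ, v (B ^ i * (x + hstep)) * q ^ (i+1))
            - ∑' i : ℕ, v (B ^ i * x) * q ^ (i+1) := by rw [hAeq, hAeq]; ring
        _ = ∑' i, d i := by
            rw [← Summable.tsum_sub (hsumm _) (hsumm _)]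
            apply tsum_congr
            intro i
            rw [hddef]
            ring
    -- mean value theorem for the main term
    obtain ⟨ξ, hξI, hξd⟩ := exists_deriv_eq_slope v
      (show t₀ < t₀ + δ₁ by linarith) hv.continuous.continuousOn hvd.differentiableOn
    have hξ1 : t₀ < ξ := hξI.1
    have hξ2 : ξ < t₀ + δ₁ := hξI.2
    -- lower bound on deriv v ξ
    have hderiv_lb : 2 * D / 3 ≤ deriv v ξ := by
      set u : ℝ := ξ - ((⌊t₀⌋ - ⌊c⌋ : ℤ) : ℝ) with hudef
      have hper : deriv v u = deriv v ξ := by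
        have h11 := hv'per.sub_int_mul_eq (x := ξ) (⌊t₀⌋ - ⌊c⌋)
        rw [mul_one] at h11
        rw [hudef]
        exact h11
      have hud : |u - c| < η + δ₂ := by
        have e1 : u - c = (ξ - t₀) + (Int.fract t₀ - c') := by
          rw [hudef, hc'def, Int.fract, Int.fract]
          push_cast
          ring
        rw [e1]
        have h12 : |(ξ - t₀) + (Int.fract t₀ - c')| ≤ |ξ - t₀| + |Int.fract t₀ - c'| :=
          abs_add_le _ _
        rw [abs_of_pos (by linarith : (0:ℝ) < ξ - t₀)] at h12
        have h13 : |Int.fract t₀ - c'| < η := htc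
        have h14 : ξ - t₀ < δ₁ := by linarith
        have h15 : δ₁ ≤ δ₂ := hδ₁₂
        linarith
      have hΓ := hΓ₂ u c
      have hrpow : Γ₂ * |u - c| ^ ε ≤ D / 3 := by
        have h1 : |u - c| ^ ε ≤ (η + δ₂) ^ ε :=
          Real.rpow_le_rpow (abs_nonneg _) hud.le hε0.le
        have h2 : (η + δ₂) ^ ε = δ₂ ^ ε * 2 := by
          have he : η + δ₂ = δ₂ * (2:ℝ) ^ (1/ε) := by rw [hηdef]; ring
          rw [he, Real.mul_rpow hδ₂0.le (by positivity),
            ← Real.rpow_mul (by norm_num : (0:ℝ) ≤ 2), one_div,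
            inv_mul_cancel₀ hε0.ne', Real.rpow_one]
        have h3 : δ₂ ^ ε = D / (6 * Γ₂) := by
          rw [hδ₂, ← Real.rpow_mul (by positivity), one_div,
            inv_mul_cancel₀ hε0.ne', Real.rpow_one]
        calc Γ₂ * |u - c| ^ ε ≤ Γ₂ * ((η + δ₂) ^ ε) :=
              mul_le_mul_of_nonneg_left h1 hΓ₂0.le
          _ = Γ₂ * (D / (6 * Γ₂) * 2) := by rw [h2, h3]
          _ = D / 3 := by field_simp; ring
      have habs2 : |deriv v u - D| ≤ D / 3 := le_trans hΓ hrpow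
      have h16 := (abs_le.mp habs2).1
      rw [hper] at h16
      linarith
    have hdn : (2 * D / 3) * δ₁ * q ^ (n+1) ≤ d n := by
      have hval : v (B ^ n * (x + hstep)) - v (B ^ n * x) = deriv v ξ * δ₁ := by
        have e2 : B ^ n * (x + hstep) = t₀ + δ₁ := by rw [mul_add, hBh, ht₀def]
        rw [e2, ← ht₀def, hξd]
        field_simp
        rw [show t₀ + δ₁ - t₀ = δ₁ by ring]; field_simp
      rw [hddef]
      simp only []
      rw [hval]
      have := mul_le_mul_of_nonneg_right
        (mul_le_mul_of_nonneg_right hderiv_lb hδ₁0.le)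
        (by positivity : (0:ℝ) ≤ q ^ (n+1))
      linarith [this]
    -- middle terms
    set r : ℝ := B ^ ((1:ℝ) - θ) with hrdef
    have hrq : r = B * q := by
      rw [hrdef, hqdef, show (1:ℝ) - θ = 1 + -θ by ring, Real.rpow_add hB0, Real.rpow_one]
    have hr1 : 1 < r := by
      rw [hrdef]
      exact (Real.one_lt_rpow_iff_of_pos hB0).mpr (Or.inl ⟨hB1, by linarith⟩)
    have hM'r : M' / (r - 1) < D / 6 := by
      have heq : (1 - B ^ (θ - 1)) * B ^ ((1:ℝ) - θ) = r - 1 := by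
        rw [hrdef, sub_mul, one_mul, ← Real.rpow_add hB0,
          show θ - 1 + (1 - θ) = 0 by ring, Real.rpow_zero]
      rw [heq] at hcond
      have h17 : 2 * M' / (r - 1) = 2 * (M' / (r - 1)) := by ring
      rw [h17] at hcond
      linarith
    have hmid : |∑ i ∈ Finset.range n, d i| ≤ D / 6 * δ₁ * q ^ (n+1) := by
      have hterm : ∀ i : ℕ, |d i| ≤ (M' * hstep * q) * r ^ i := by
        intro i
        rw [hddef]
        simp only []
        rw [abs_mul, abs_pow, abs_of_pos hq0]
        have h1 : |v (B ^ i * (x + hstep)) - v (B ^ i * x)| ≤ M' * (B ^ i * hstep) := by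
          have h18 := hlip (B ^ i * (x + hstep)) (B ^ i * x)
          have e18 : B ^ i * (x + hstep) - B ^ i * x = B ^ i * hstep := by ring
          rw [e18, abs_of_pos (mul_pos (pow_pos hB0 i) hstep0)] at h18
          exact h18
        calc |v (B ^ i * (x + hstep)) - v (B ^ i * x)| * q ^ (i+1)
            ≤ M' * (B ^ i * hstep) * q ^ (i+1) :=
              mul_le_mul_of_nonneg_right h1 (pow_nonneg hq0.le _)
          _ = (M' * hstep * q) * r ^ i := by
              rw [hrq, mul_pow, pow_succ]
              ring
      have hsum1 : |∑ i ∈ Finset.range n, d i|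
          ≤ ∑ i ∈ Finset.range n, ((M' * hstep * q) * r ^ i) :=
        le_trans (Finset.abs_sum_le_sum_abs _ _) (Finset.sum_le_sum fun i _ => hterm i)
      have hgeom : ∑ i ∈ Finset.range n, r ^ i ≤ r ^ n / (r - 1) := by
        rw [geom_sum_eq (ne_of_gt hr1)]
        have h30 : (0:ℝ) < r - 1 := by linarith
        exact (div_le_div_iff_of_pos_right h30).mpr (by linarith)
      have hhr : hstep * r ^ n = δ₁ * q ^ n := by
        rw [hhdef, hrq, mul_pow]
        field_simp
      have hfin : (M' * hstep * q) * (r ^ n / (r - 1)) ≤ D / 6 * δ₁ * q ^ (n+1) := by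
        have e3 : (M' * hstep * q) * (r ^ n / (r - 1)) = (M' / (r - 1)) * (hstep * r ^ n) * q := by
          ring
        rw [e3, hhr]
        have h19 : (M' / (r - 1)) * (δ₁ * q ^ n) * q ≤ (D / 6) * (δ₁ * q ^ n) * q :=
          mul_le_mul_of_nonneg_right
            (mul_le_mul_of_nonneg_right hM'r.le (by positivity)) hq0.le
        calc (M' / (r - 1)) * (δ₁ * q ^ n) * q ≤ (D / 6) * (δ₁ * q ^ n) * q := h19
          _ = D / 6 * δ₁ * q ^ (n+1) := by rw [pow_succ]; ring
      calc |∑ i ∈ Finset.range n, d i|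
          ≤ ∑ i ∈ Finset.range n, ((M' * hstep * q) * r ^ i) := hsum1
        _ = (M' * hstep * q) * ∑ i ∈ Finset.range n, r ^ i := by rw [Finset.mul_sum]
        _ ≤ (M' * hstep * q) * (r ^ n / (r - 1)) :=
            mul_le_mul_of_nonneg_left hgeom (by positivity)
        _ ≤ D / 6 * δ₁ * q ^ (n+1) := hfin
    -- tail
    have htail : |∑' i : ℕ, d (i + (n+1))| ≤ 2 * (M * q ^ (n+2) / (1 - q)) := by
      have hb1 : ∀ i : ℕ, ‖d (i + (n+1))‖ ≤ (2 * M * q ^ (n+2)) * q ^ i := by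
        intro i
        rw [hddef]
        simp only []
        rw [Real.norm_eq_abs, abs_mul, abs_pow, abs_of_pos hq0]
        have h20 : |v (B ^ (i + (n+1)) * (x + hstep)) - v (B ^ (i + (n+1)) * x)| ≤ 2 * M := by
          have := abs_sub (v (B ^ (i + (n+1)) * (x + hstep))) (v (B ^ (i + (n+1)) * x))
          have := hM (B ^ (i + (n+1)) * (x + hstep))
          have := hM (B ^ (i + (n+1)) * x)
          calc |v (B ^ (i + (n+1)) * (x + hstep)) - v (B ^ (i + (n+1)) * x)|
              ≤ |v (B ^ (i + (n+1)) * (x + hstep))| + |v (B ^ (i + (n+1)) * x)| :=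
                abs_sub _ _
            _ ≤ 2 * M := by linarith
        calc |v (B ^ (i + (n+1)) * (x + hstep)) - v (B ^ (i + (n+1)) * x)| * q ^ (i + (n+1) + 1)
            ≤ 2 * M * q ^ (i + (n+1) + 1) :=
              mul_le_mul_of_nonneg_right h20 (by positivity)
          _ = (2 * M * q ^ (n+2)) * q ^ i := by
              rw [show i + (n+1) + 1 = (n+2) + i by ring, pow_add]
              ring
      have hsummb : Summable (fun i : ℕ => (2 * M * q ^ (n+2)) * q ^ i) :=
        (summable_geometric_of_lt_one hq0.le hq1).mul_left _
      have hsd : Summable (fun i : ℕ => ‖d (i + (n+1))‖) :=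
        Summable.of_nonneg_of_le (fun i => norm_nonneg _) hb1 hsummb
      calc |∑' i : ℕ, d (i + (n+1))| = ‖∑' i : ℕ, d (i + (n+1))‖ := (Real.norm_eq_abs _).symm
        _ ≤ ∑' i : ℕ, ‖d (i + (n+1))‖ := norm_tsum_le_tsum_norm hsd
        _ ≤ ∑' i : ℕ, (2 * M * q ^ (n+2)) * q ^ i := Summable.tsum_le_tsum hb1 hsd hsummb
        _ = (2 * M * q ^ (n+2)) * ∑' i : ℕ, q ^ i := tsum_mul_left
        _ = (2 * M * q ^ (n+2)) * (1 - q)⁻¹ := by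
            rw [tsum_geometric_of_lt_one hq0.le hq1]
        _ = 2 * (M * q ^ (n+2) / (1 - q)) := by ring
    -- combine
    have hsplit : ∑' i, d i = (∑ i ∈ Finset.range n, d i + d n) + ∑' i : ℕ, d (i + (n+1)) := by
      rw [← Finset.sum_range_succ]
      rw [Summable.sum_add_tsum_nat_add (n+1) hd_sum]
    have hDδ : D * δ₁ = 6 * M * q / (1 - q) := by
      rw [hδ₁, hBθ]
      field_simp
    have h8 : D * δ₁ * q ^ (n+1) = 6 * (M * q ^ (n+2) / (1 - q)) := by
      rw [hDδ, show n + 2 = (n+1) + 1 from rfl, pow_succ]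
      ring
    have hlower : M * q ^ (n+2) / (1 - q) ≤ ∑' i, d i := by
      rw [hsplit]
      have hge1 : -(D / 6 * δ₁ * q ^ (n+1)) ≤ ∑ i ∈ Finset.range n, d i :=
        neg_le_of_abs_le hmid
      have hge2 : -(2 * (M * q ^ (n+2) / (1 - q))) ≤ ∑' i : ℕ, d (i + (n+1)) :=
        neg_le_of_abs_le htail
      linarith [hdn, hge1, hge2, h8]
    -- value of c₀ * hstep ^ θ
    have hq2 : q ^ 2 = B ^ (-2 * θ) := by
      rw [hqdef, ← Real.rpow_natCast (B ^ (-θ)) 2, ← Real.rpow_mul hB0.le]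
      congr 1
      push_cast
      ring
    have hδ₁eq : δ₁ = (6 * M / (1 - q)) * q / D := by
      rw [hδ₁, hBθ]
      field_simp
    have hK0 : (0:ℝ) < 6 * M / (1 - q) := by positivity
    have hc₀δ : c₀ * δ₁ ^ θ = M * q ^ 2 / (2 * (1 - q)) := by
      have hqθ : q ^ θ = B ^ (-θ * θ) := by
        rw [hqdef, ← Real.rpow_mul hB0.le]
      have hδθ : δ₁ ^ θ = (6 * M / (1 - q)) ^ θ * B ^ (-θ * θ) / D ^ θ := by
        rw [hδ₁eq, Real.div_rpow (by positivity) hc.le,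
          Real.mul_rpow hK0.le hq0.le, hqθ]
      rw [hc₀, hδθ]
      have hDθ : (0:ℝ) < D ^ θ := rpow_pos_of_pos hc θ
      have hKK : (6 * M / (1 - q)) ^ ((1:ℝ) - θ) * (6 * M / (1 - q)) ^ θ = 6 * M / (1 - q) := by
        rw [← Real.rpow_add hK0, show (1:ℝ) - θ + θ = 1 by ring, Real.rpow_one]
      have hBB : B ^ (-2 * θ + θ ^ 2) * B ^ (-θ * θ) = q ^ 2 := by
        rw [← Real.rpow_add hB0, show -2 * θ + θ ^ 2 + -θ * θ = -2 * θ by ring, ← hq2]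
      calc (6 * M / (1 - q)) ^ ((1:ℝ) - θ) * B ^ (-2 * θ + θ ^ 2) * D ^ θ / 12 *
            ((6 * M / (1 - q)) ^ θ * B ^ (-θ * θ) / D ^ θ)
          = ((6 * M / (1 - q)) ^ ((1:ℝ) - θ) * (6 * M / (1 - q)) ^ θ) *
            (B ^ (-2 * θ + θ ^ 2) * B ^ (-θ * θ)) * (D ^ θ / D ^ θ) / 12 := by ring
        _ = (6 * M / (1 - q)) * (q ^ 2) * 1 / 12 := by
            rw [hKK, hBB, div_self hDθ.ne']
        _ = M * q ^ 2 / (2 * (1 - q)) := by field_simp; ring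
    have hhθ : hstep ^ θ = δ₁ ^ θ * q ^ n := by
      have hinv : ((B ^ n : ℝ))⁻¹ ^ θ = q ^ n := by
        rw [← Real.rpow_natCast B n, ← Real.rpow_neg hB0.le]
        rw [← Real.rpow_mul hB0.le]
        rw [show -(n:ℝ) * θ = -θ * (n:ℝ) by ring]
        rw [Real.rpow_mul hB0.le, ← hqdef, Real.rpow_natCast]
      rw [hhdef, div_eq_mul_inv,
        Real.mul_rpow hδ₁0.le (inv_nonneg.mpr hBn0.le), hinv]
    have hfinal : c₀ * hstep ^ θ = M * q ^ (n+2) / (2 * (1 - q)) := by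
      rw [hhθ, ← mul_assoc, hc₀δ, show n + 2 = 2 + n by ring, pow_add]
      ring
    have hle : c₀ * hstep ^ θ ≤ A x - A (x + hstep) := by
      rw [hS, hfinal]
      have h21 : M * q ^ (n+2) / (2 * (1 - q)) ≤ M * q ^ (n+2) / (1 - q) := by
        apply div_le_div_of_nonneg_left (by positivity) h1q
        linarith
      exact le_trans h21 hlower
    exact ⟨hstep, hstep0, hsteplt, le_trans hle (le_abs_self _)⟩
  refine ⟨key, ?_⟩
  rintro γ hγ ⟨C, ε', hε'0, hC⟩
  have hc₀pos : 0 < c₀ := by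
    rw [hc₀]
    have h1 : (0:ℝ) < 6 * M / (1 - q) := by positivity
    have := rpow_pos_of_pos h1 (1 - θ)
    have := rpow_pos_of_pos hB0 (-2 * θ + θ ^ 2)
    have := rpow_pos_of_pos hc θ
    positivity
  set C' : ℝ := max C 1 with hC'def
  have hC'0 : (0:ℝ) < C' := lt_of_lt_of_le one_pos (le_max_right _ _)
  have hrp : (0:ℝ) < (c₀ / (2 * C')) ^ (1 / γ) :=
    rpow_pos_of_pos (by positivity) _
  obtain ⟨h, hh0, hhlt, hhge⟩ := key (min ε' ((c₀ / (2 * C')) ^ (1 / γ)))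
    (lt_min hε'0 hrp)
  have habs : |x - (x + h)| = h := by
    rw [show x - (x + h) = -h by ring, abs_neg, abs_of_pos hh0]
  have h1 : |A x - A (x + h)| ≤ C * h ^ (θ + γ) := by
    have hmem : |x + h - x| < ε' := by
      rw [show x + h - x = h by ring, abs_of_pos hh0]
      exact lt_of_lt_of_le hhlt (min_le_left _ _)
    have := hC (x + h) hmem
    rwa [habs] at this
  have h2 : c₀ * h ^ θ ≤ C * (h ^ θ * h ^ γ) := by
    rw [Real.rpow_add hh0] at h1
    exact le_trans hhge h1
  have h3 : C * (h ^ θ * h ^ γ) ≤ C' * h ^ γ * h ^ θ := by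
    have hp : (0:ℝ) ≤ h ^ θ * h ^ γ := by positivity
    calc C * (h ^ θ * h ^ γ) ≤ C' * (h ^ θ * h ^ γ) :=
          mul_le_mul_of_nonneg_right (le_max_left _ _) hp
      _ = C' * h ^ γ * h ^ θ := by ring
  have h4 : c₀ ≤ C' * h ^ γ :=
    le_of_mul_le_mul_right (le_trans h2 h3) (rpow_pos_of_pos hh0 θ)
  have h5 : h ^ γ < c₀ / (2 * C') := by
    have hlt' : h < (c₀ / (2 * C')) ^ (1 / γ) := lt_of_lt_of_le hhlt (min_le_right _ _)
    have h50 := Real.rpow_lt_rpow hh0.le hlt' hγ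
    have hid : ((c₀/(2*C'))^(1/γ))^γ = c₀/(2*C') := by
      rw [← Real.rpow_mul (by positivity : (0:ℝ) ≤ c₀/(2*C')), one_div,
        inv_mul_cancel₀ hγ.ne', Real.rpow_one]
    rwa [hid] at h50
  have h6 : C' * h ^ γ < C' * (c₀ / (2 * C')) := mul_lt_mul_of_pos_left h5 hC'0
  have h7 : C' * (c₀ / (2 * C')) = c₀ / 2 := by field_simp
  linarith
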